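/- The exponential generating function Σ_{n≥0} P_n(x)·t^n/n! equals (x + tan(t))/(1 − x·tan(t)) for real x and t in a neighborhood of 0 where the right side is defined. -/

import Mathlib

open Polynomial Filter Topology

noncomputable def tanDerivPoly : ℕ → Polynomial ℝ
  | 0 => X
  | n + 1 => (1 + X ^ 2) * derivative (tanDerivPoly n)

lemma tanDerivPoly_iteratedDeriv (c : ℂ) (n : ℕ) :
    ∀ z : ℂ, Complex.cos (z + c) ≠ 0 →
      iteratedDeriv n (fun w => Complex.tan (w + c)) z
        = Polynomial.aeval (Complex.tan (z + c)) (tanDerivPoly n) := by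
  induction n with
  | zero =>
    intro z hz
    simp [tanDerivPoly, iteratedDeriv_zero]
  | succ n ih =>
    intro z hz
    have hU : IsOpen {w : ℂ | Complex.cos (w + c) ≠ 0} := by
      have : {w : ℂ | Complex.cos (w + c) ≠ 0}
          = (fun w => Complex.cos (w + c)) ⁻¹' {0}ᶜ := rfl
      rw [this]
      exact (isOpen_compl_singleton).preimage
        (Complex.continuous_cos.comp (continuous_id.add continuous_const))
    have hmem : {w : ℂ | Complex.cos (w + c) ≠ 0} ∈ 𝓝 z := hU.mem_nhds hz
    have heq : iteratedDeriv n (fun w => Complex.tan (w + c)) =ᶠ[𝓝 z]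
        fun w => Polynomial.aeval (Complex.tan (w + c)) (tanDerivPoly n) := by
      filter_upwards [hmem] with w hw
      exact ih w hw
    rw [iteratedDeriv_succ, heq.deriv_eq]
    -- compute the derivative of w ↦ aeval (tan (w + c)) (tanDerivPoly n)
    set q : Polynomial ℂ := (tanDerivPoly n).map (algebraMap ℝ ℂ) with hq
    have hqe : ∀ w : ℂ, Polynomial.aeval w (tanDerivPoly n) = q.eval w := by
      intro w; rw [hq, Polynomial.eval_map]; rfl
    have htand : HasDerivAt (fun w => Complex.tan (w + c))
        (1 / Complex.cos (z + c) ^ 2) z := by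
      have h1 : HasDerivAt (fun w : ℂ => w + c) 1 z := (hasDerivAt_id z).add_const c
      have h2 := Complex.hasDerivAt_tan hz
      simpa [Function.comp_def] using h2.comp z h1
    have hpoly : HasDerivAt (fun y : ℂ => q.eval y)
        (q.derivative.eval (Complex.tan (z + c))) (Complex.tan (z + c)) :=
      q.hasDerivAt _
    have hcomp : HasDerivAt (fun w => Polynomial.aeval (Complex.tan (w + c)) (tanDerivPoly n))
        (q.derivative.eval (Complex.tan (z + c)) * (1 / Complex.cos (z + c) ^ 2)) z := by
      have := hpoly.comp z htand
      refine HasDerivAt.congr_of_eventuallyEq this ?_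
      filter_upwards with w
      simp [hqe]
    rw [hcomp.deriv]
    -- now identify with aeval of tanDerivPoly (n+1)
    have hcossq : (1 : ℂ) / Complex.cos (z + c) ^ 2 = 1 + Complex.tan (z + c) ^ 2 := by
      have hs := Complex.sin_sq_add_cos_sq (z + c)
      rw [Complex.tan_eq_sin_div_cos]
      field_simp
      linear_combination -hs
    show _ = Polynomial.aeval (Complex.tan (z + c)) ((1 + X ^ 2) * derivative (tanDerivPoly n))
    rw [hcossq]
    rw [map_mul]
    have hder : Polynomial.aeval (Complex.tan (z + c)) (derivative (tanDerivPoly n))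
        = q.derivative.eval (Complex.tan (z + c)) := by
      rw [hq, Polynomial.derivative_map, Polynomial.eval_map]; rfl
    rw [hder]
    simp [mul_comm]

theorem tanDerivPoly_egf (x : ℝ) :
    ∀ᶠ t in 𝓝 (0 : ℝ),
      ∑' n : ℕ, (tanDerivPoly n).eval x * t ^ n / (n.factorial : ℝ) =
        (x + Real.tan t) / (1 - x * Real.tan t) := by
  set a : ℝ := Real.arctan x with ha
  set c : ℂ := (a : ℂ) with hc
  have hcosa : Real.cos a ≠ 0 := (Real.cos_arctan_pos x).ne'
  have hcosc : Complex.cos c ≠ 0 := by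
    rw [hc, ← Complex.ofReal_cos]
    exact_mod_cast hcosa
  -- find a ball around 0 where cos (z + c) ≠ 0
  have hU : IsOpen {w : ℂ | Complex.cos (w + c) ≠ 0} := by
    have : {w : ℂ | Complex.cos (w + c) ≠ 0}
        = (fun w => Complex.cos (w + c)) ⁻¹' {0}ᶜ := rfl
    rw [this]
    exact (isOpen_compl_singleton).preimage
      (Complex.continuous_cos.comp (continuous_id.add continuous_const))
  have h0 : (0 : ℂ) ∈ {w : ℂ | Complex.cos (w + c) ≠ 0} := by
    simpa using hcosc
  obtain ⟨r, hr, hball⟩ := Metric.isOpen_iff.mp hU 0 h0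
  have hdiff : DifferentiableOn ℂ (fun w => Complex.tan (w + c)) (Metric.ball 0 r) := by
    intro z hzb
    have hz : Complex.cos (z + c) ≠ 0 := hball hzb
    exact ((Complex.differentiableAt_tan.mpr hz).comp z
      ((differentiableAt_id).add_const c)).differentiableWithinAt
  -- eventual conditions
  have ev1 : ∀ᶠ t : ℝ in 𝓝 0, |t| < r := by
    have : ContinuousAt (fun t : ℝ => |t|) 0 := continuous_abs.continuousAt
    have := this.eventually_lt_const (by simpa using hr)
    simpa using this
  have ev2 : ∀ᶠ t : ℝ in 𝓝 0, Real.cos (t + a) ≠ 0 := by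
    have hca : ContinuousAt (fun t : ℝ => Real.cos (t + a)) 0 :=
      (Real.continuous_cos.comp (continuous_id.add continuous_const)).continuousAt
    exact hca.eventually_ne (by simpa using hcosa)
  have ev3 : ∀ᶠ t : ℝ in 𝓝 0, Real.cos t ≠ 0 := by
    have hca : ContinuousAt Real.cos 0 := Real.continuous_cos.continuousAt
    exact hca.eventually_ne (by simp)
  have ev4 : ∀ᶠ t : ℝ in 𝓝 0, 1 - x * Real.tan t ≠ 0 := by
    have htan : ContinuousAt Real.tan 0 := Real.continuousAt_tan.mpr (by simp)
    have hca : ContinuousAt (fun t : ℝ => 1 - x * Real.tan t) 0 :=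
      (continuousAt_const.sub (continuousAt_const.mul htan))
    exact hca.eventually_ne (by simp [Real.tan_zero])
  filter_upwards [ev1, ev2, ev3, ev4] with t ht1 ht2 ht3 ht4
  -- Taylor series at 0
  have htb : (t : ℂ) ∈ Metric.ball (0 : ℂ) r := by
    simp only [Metric.mem_ball, dist_zero_right]
    simpa using ht1
  have hsum := Complex.hasSum_taylorSeries_on_ball hdiff htb
  -- identify the coefficients
  have hcoef : ∀ n : ℕ, iteratedDeriv n (fun w => Complex.tan (w + c)) 0
      = ((((tanDerivPoly n).eval x) : ℝ) : ℂ) := by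
    intro n
    rw [tanDerivPoly_iteratedDeriv c n 0 (by simpa using hcosc)]
    have htanc : Complex.tan (0 + c) = (x : ℂ) := by
      rw [zero_add, hc, ← Complex.ofReal_tan, ha, Real.tan_arctan]
    rw [htanc]
    rw [show ((x : ℝ) : ℂ) = algebraMap ℝ ℂ x from rfl,
      Polynomial.aeval_algebraMap_apply_eq_algebraMap_eval]
    rfl
  have hsum' : HasSum (fun n : ℕ =>
      (((tanDerivPoly n).eval x * t ^ n / (n.factorial : ℝ) : ℝ) : ℂ))
      (Complex.tan ((t : ℂ) + c)) := by
    convert hsum using 1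
    · rfl
    funext n
    rw [hcoef n]
    simp only [smul_eq_mul, sub_zero]
    push_cast
    ring
  have hval : Complex.tan ((t : ℂ) + c) = ((Real.tan (t + a) : ℝ) : ℂ) := by
    rw [hc, ← Complex.ofReal_add, ← Complex.ofReal_tan]
  rw [hval] at hsum'
  have hreal : HasSum (fun n : ℕ => (tanDerivPoly n).eval x * t ^ n / (n.factorial : ℝ))
      (Real.tan (t + a)) := Complex.hasSum_ofReal.mp hsum'
  rw [hreal.tsum_eq]
  -- finally, the tangent addition formula
  have hx : Real.tan a = x := by rw [ha, Real.tan_arctan]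
  rw [← hx] at ht4 ⊢
  rw [Real.tan_eq_sin_div_cos, Real.tan_eq_sin_div_cos] at ht4
  rw [Real.tan_eq_sin_div_cos, Real.tan_eq_sin_div_cos, Real.tan_eq_sin_div_cos,
    Real.sin_add, Real.cos_add]
  have hd : Real.cos t * Real.cos a - Real.sin t * Real.sin a ≠ 0 := by
    have : Real.cos (t + a) = Real.cos t * Real.cos a - Real.sin t * Real.sin a :=
      Real.cos_add t a
    rw [← this]; exact ht2
  rw [div_eq_div_iff hd ht4]
  field_simp
  ring
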